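/- For all n, m ≥ 0 one has T₂(n, m+1) ≥ T₂(n+1, m); equivalently, for every fixed k ≥ 1 the function m ↦ T₂(k−m, m) is non-decreasing in m on 0 ≤ m ≤ k. -/

import Mathlib

/-- For all `n, m ≥ 0` one has `T₂(n, m+1) ≥ T₂(n+1, m)`; equivalently, for every fixed
`k ≥ 1` the function `m ↦ T₂(k−m, m)` is non-decreasing in `m` on `0 ≤ m ≤ k`. -/
theorem stmt_8 (μ₁ μ₂ : ℝ) (hμ₁ : 0 < μ₁) (hμ₂ : 0 < μ₂)
    (T : ℕ × ℕ → ℝ)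
    (hT0 : ∀ m : ℕ, T (0, m) = m / μ₂)
    (hTb : ∀ n : ℕ, T (n + 1, 0) = 1 / μ₁ + T (n, 1))
    (hTrec : ∀ n m : ℕ, T (n + 1, m + 1) =
      1 / (μ₁ + μ₂) + μ₁ / (μ₁ + μ₂) * T (n, m + 2) + μ₂ / (μ₁ + μ₂) * T (n + 1, m))
    (T₂ : ℕ → ℕ → ℝ)
    (hT₂ : ∀ n m : ℕ, T₂ n m = T (n, m) - n / μ₁) :
    (∀ n m : ℕ, T₂ n (m + 1) ≥ T₂ (n + 1) m) ∧
    (∀ k : ℕ, 1 ≤ k → ∀ m : ℕ, m + 1 ≤ k → T₂ (k - (m + 1)) (m + 1) ≥ T₂ (k - m) m) := by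
  have hspos : 0 < μ₁ + μ₂ := by linarith
  have hsne : μ₁ + μ₂ ≠ 0 := ne_of_gt hspos
  -- multiplied-through recursion
  have hrec' : ∀ n m : ℕ, (μ₁ + μ₂) * T (n + 1, m + 1) =
      1 + μ₁ * T (n, m + 2) + μ₂ * T (n + 1, m) := by
    intro n m
    rw [hTrec n m]
    field_simp
  have hb' : ∀ n : ℕ, μ₁ * T (n + 1, 0) = 1 + μ₁ * T (n, 1) := by
    intro n
    rw [hTb n]
    field_simp
  -- monotonicity of T in m
  have mono : ∀ n m : ℕ, T (n, m) ≤ T (n, m + 1) := by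
    intro n
    induction n with
    | zero =>
      intro m
      rw [hT0, hT0]
      push_cast
      gcongr
      linarith
    | succ n ih =>
      intro m
      induction m with
      | zero =>
        have h1 := hrec' n 0
        have h2 := hb' n
        have h3 := ih 1
        nlinarith [mul_nonneg hμ₁.le (sub_nonneg.2 h3)]
      | succ m ihm =>
        have h1 := hrec' n (m + 1)
        have h2 := hrec' n m
        have h3 := ih (m + 2)
        nlinarith [mul_nonneg hμ₁.le (sub_nonneg.2 h3),
          mul_nonneg hμ₂.le (sub_nonneg.2 ihm), hspos]
  -- key inequality: T(n+1,m) ≤ T(n,m+1) + 1/μ₁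
  have key : ∀ n m : ℕ, μ₁ * T (n + 1, m) ≤ μ₁ * T (n, m + 1) + 1 := by
    intro n m
    induction m with
    | zero =>
      have := hb' n
      linarith
    | succ m ihm =>
      have h1 := hrec' n m
      have h3 := mono n (m + 1)
      -- (μ₁+μ₂) * μ₁ * T(n+1,m+1) = μ₁ + μ₁² T(n,m+2) + μ₂ * (μ₁ T(n+1,m))
      -- ≤ μ₁ + μ₁² T(n,m+2) + μ₂ (μ₁ T(n,m+1) + 1)
      -- ≤ μ₁ + μ₂ + (μ₁+μ₂) μ₁ T(n,m+2)
      nlinarith [mul_nonneg hμ₂.le (sub_nonneg.2 ihm),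
        mul_nonneg (mul_nonneg hμ₁.le hμ₂.le) (sub_nonneg.2 h3), hspos, hμ₁]
  have main : ∀ n m : ℕ, T₂ n (m + 1) ≥ T₂ (n + 1) m := by
    intro n m
    rw [hT₂, hT₂]
    have h := key n m
    have hcast : ((n : ℝ) + 1) / μ₁ = (n : ℝ) / μ₁ + 1 / μ₁ := by ring
    push_cast
    rw [hcast]
    have h1 : T (n + 1, m) - ((n : ℝ) / μ₁ + 1 / μ₁) ≤ T (n, m + 1) - (n : ℝ) / μ₁ := by
      have hinv : μ₁ * (1 / μ₁) = 1 := by field_simp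
      have h2 : T (n + 1, m) ≤ T (n, m + 1) + 1 / μ₁ := by
        nlinarith [h, hinv, hμ₁]
      linarith
    linarith
  refine ⟨main, fun k hk m hm => ?_⟩
  have : k - (m + 1) + 1 = k - m := by omega
  calc T₂ (k - (m + 1)) (m + 1) ≥ T₂ (k - (m + 1) + 1) m := main _ m
    _ = T₂ (k - m) m := by rw [this]
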